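/- The Apéry set of S is β-rectangular if and only if Ap(S) has a unique maximal element with respect to the order ⪯_M and this element has a unique maximal representation. -/

import Mathlib

open Finset

/-- `S` is a numerical semigroup: a submonoid of `(ℕ, +)` with finite complement. -/
def IsNumSgp (S : Set ℕ) : Prop :=
  0 ∈ S ∧ (∀ a ∈ S, ∀ b ∈ S, a + b ∈ S) ∧ (Sᶜ : Set ℕ).Finite

/-- `s` belongs to the Apéry set of `S` with respect to `m`:
`s ∈ S` and `s - m ∉ S` (i.e. no `u ∈ S` with `u + m = s`). -/
def InApery (S : Set ℕ) (m s : ℕ) : Prop :=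
  s ∈ S ∧ ∀ u ∈ S, u + m ≠ s

def AperySet (S : Set ℕ) (m : ℕ) : Set ℕ := {s | InApery S m s}

/-- `ordS S s` is the largest `h` such that `s` is a sum of `h` nonzero elements of `S`. -/
noncomputable def ordS (S : Set ℕ) (s : ℕ) : ℕ :=
  sSup {h : ℕ | ∃ f : Fin h → ℕ, (∀ j, f j ∈ S ∧ f j ≠ 0) ∧ ∑ j, f j = s}

/-- `g` generates `S`. -/
def Generates (S : Set ℕ) {ν : ℕ} (g : Fin ν → ℕ) : Prop :=
  ∀ s, s ∈ S ↔ ∃ lam : Fin ν → ℕ, ∑ i, lam i * g i = s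

/-- `g` is a minimal generating system of `S`: it generates `S`
and no `g i` is generated by the remaining generators. -/
def MinimalGen (S : Set ℕ) {ν : ℕ} (g : Fin ν → ℕ) : Prop :=
  Generates S g ∧ ∀ i, ¬ ∃ lam : Fin ν → ℕ, lam i = 0 ∧ ∑ j, lam j * g j = g i

/-- `lam` is a maximal representation of `s`: the coefficient sum equals `ordS S s`. -/
def IsMaxRep (S : Set ℕ) {ν : ℕ} (g : Fin ν → ℕ) (lam : Fin ν → ℕ) (s : ℕ) : Prop :=
  ∑ i, lam i * g i = s ∧ ∑ i, lam i = ordS S s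

/-- `s` has a unique maximal representation. -/
def UniqueMaxRep (S : Set ℕ) {ν : ℕ} (g : Fin ν → ℕ) (s : ℕ) : Prop :=
  ∃! lam : Fin ν → ℕ, IsMaxRep S g lam s

/-- `β_i = max {h | h g_i ∈ Ap(S) and ord(h g_i) = h}`. -/
noncomputable def betaN (S : Set ℕ) (m : ℕ) {ν : ℕ} (g : Fin ν → ℕ) (i : Fin ν) : ℕ :=
  sSup {h : ℕ | InApery S m (h * g i) ∧ ordS S (h * g i) = h}

/-- `γ_i = max {h | h g_i ∈ Ap(S), ord(h g_i) = h and h g_i has a unique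
maximal representation}`. -/
noncomputable def gammaN (S : Set ℕ) (m : ℕ) {ν : ℕ} (g : Fin ν → ℕ) (i : Fin ν) : ℕ :=
  sSup {h : ℕ | InApery S m (h * g i) ∧ ordS S (h * g i) = h ∧ UniqueMaxRep S g (h * g i)}

/-- `B = {Σ_{i≥2} λ_i g_i : 0 ≤ λ_i ≤ β_i}`. -/
def Bset (S : Set ℕ) (m : ℕ) {ν : ℕ} [NeZero ν] (g : Fin ν → ℕ) : Set ℕ :=
  {s | ∃ lam : Fin ν → ℕ, lam 0 = 0 ∧ (∀ i, lam i ≤ betaN S m g i) ∧ ∑ i, lam i * g i = s}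

/-- `Γ = {Σ_{i≥2} λ_i g_i : 0 ≤ λ_i ≤ γ_i}`. -/
def GammaSet (S : Set ℕ) (m : ℕ) {ν : ℕ} [NeZero ν] (g : Fin ν → ℕ) : Set ℕ :=
  {s | ∃ lam : Fin ν → ℕ, lam 0 = 0 ∧ (∀ i, lam i ≤ gammaN S m g i) ∧ ∑ i, lam i * g i = s}

/-- `s ⪯_M t`. -/
def predM (S : Set ℕ) (s t : ℕ) : Prop :=
  ∃ u ∈ S, s + u = t ∧ ordS S s + ordS S u = ordS S t

section Aux

variable {S : Set ℕ} {ν : ℕ} {g : Fin ν → ℕ}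

/-- The defining set of `ordS`. -/
def ordSet (S : Set ℕ) (s : ℕ) : Set ℕ :=
  {h : ℕ | ∃ f : Fin h → ℕ, (∀ j, f j ∈ S ∧ f j ≠ 0) ∧ ∑ j, f j = s}

lemma ordSet_le {s h : ℕ} (hh : h ∈ ordSet S s) : h ≤ s := by
  obtain ⟨f, hf, hsum⟩ := hh
  calc h = ∑ _j : Fin h, 1 := by simp
  _ ≤ ∑ j, f j := Finset.sum_le_sum fun j _ => Nat.one_le_iff_ne_zero.2 (hf j).2
  _ = s := hsum

lemma ordSet_bddAbove (S : Set ℕ) (s : ℕ) : BddAbove (ordSet S s) :=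
  ⟨s, fun _ hh => ordSet_le hh⟩

lemma ordS_eq_sSup (S : Set ℕ) (s : ℕ) : ordS S s = sSup (ordSet S s) := rfl

lemma exists_pieces (hg : ∀ i, g i ∈ S) (hgpos : ∀ i, g i ≠ 0) :
    ∀ (n : ℕ) (lam : Fin ν → ℕ), ∑ i, lam i = n →
      ∃ f : Fin n → ℕ, (∀ j, f j ∈ S ∧ f j ≠ 0) ∧ ∑ j, f j = ∑ i, lam i * g i := by
  intro n
  induction n with
  | zero =>
    intro lam hlam
    have h0 : ∀ i ∈ Finset.univ, lam i = 0 := Finset.sum_eq_zero_iff.1 hlam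
    refine ⟨Fin.elim0, fun j => j.elim0, ?_⟩
    have : ∑ i, lam i * g i = 0 :=
      Finset.sum_eq_zero (fun i hi => by rw [h0 i hi, zero_mul])
    rw [this]
    simp
  | succ n ih =>
    intro lam hlam
    have hex : ∃ i, lam i ≠ 0 := by
      by_contra hc
      push_neg at hc
      simp [hc] at hlam
    obtain ⟨i, hi⟩ := hex
    set lam' := Function.update lam i (lam i - 1) with hlamdef
    have hdecomp : ∀ j, lam j = lam' j + (if j = i then 1 else 0) := by
      intro j
      by_cases h : j = i
      · subst h; simp [hlamdef]; omega
      · simp [hlamdef, Function.update_of_ne h, h]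
    have hsum' : ∑ j, lam' j = n := by
      have : ∑ j, lam j = ∑ j, lam' j + 1 := by
        rw [Finset.sum_congr rfl (fun j _ => hdecomp j), Finset.sum_add_distrib,
          Finset.sum_ite_eq' Finset.univ i (fun _ => 1), if_pos (Finset.mem_univ i)]
      omega
    obtain ⟨f', hf', hsumf'⟩ := ih lam' hsum'
    refine ⟨Fin.cons (g i) f', ?_, ?_⟩
    · intro j
      refine Fin.cases ?_ ?_ j
      · exact ⟨hg i, hgpos i⟩
      · intro k; simpa using hf' k
    · rw [Fin.sum_cons, hsumf']
      have : ∑ j, lam j * g j = ∑ j, lam' j * g j + g i := by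
        calc ∑ j, lam j * g j = ∑ j, (lam' j * g j + (if j = i then 1 else 0) * g j) := by
              refine Finset.sum_congr rfl fun j _ => by rw [← add_mul, ← hdecomp j]
        _ = ∑ j, lam' j * g j + ∑ j, (if j = i then 1 else 0) * g j := Finset.sum_add_distrib
        _ = ∑ j, lam' j * g j + g i := by
              congr 1
              rw [Finset.sum_congr rfl (fun j _ => by rw [ite_mul, zero_mul, one_mul])]
              rw [Finset.sum_ite_eq' Finset.univ i g, if_pos (Finset.mem_univ i)]
      omega

lemma ord_ge_rep (hg : ∀ i, g i ∈ S) (hgpos : ∀ i, g i ≠ 0) {lam : Fin ν → ℕ} {s : ℕ}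
    (h : ∑ i, lam i * g i = s) : ∑ i, lam i ≤ ordS S s := by
  obtain ⟨f, hf, hsum⟩ := exists_pieces hg hgpos (∑ i, lam i) lam rfl
  exact le_csSup (ordSet_bddAbove S s) ⟨f, hf, by rw [hsum, h]⟩

lemma ordSet_nonempty (hs : s ∈ S) : (ordSet S s).Nonempty := by
  rcases eq_or_ne s 0 with rfl | h0
  · exact ⟨0, Fin.elim0, fun j => j.elim0, by simp⟩
  · exact ⟨1, fun _ => s, fun _ => ⟨hs, h0⟩, by simp⟩

lemma ordS_mem (hs : s ∈ S) : ordS S s ∈ ordSet S s :=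
  Nat.sSup_mem (ordSet_nonempty hs) (ordSet_bddAbove S s)

lemma exists_maxrep (hgen : Generates S g) (hg : ∀ i, g i ∈ S) (hgpos : ∀ i, g i ≠ 0)
    {s : ℕ} (hs : s ∈ S) :
    ∃ lam : Fin ν → ℕ, ∑ i, lam i * g i = s ∧ ∑ i, lam i = ordS S s := by
  obtain ⟨f, hf, hsum⟩ := ordS_mem hs
  choose mu hmu using fun j => (hgen (f j)).1 (hf j).1
  refine ⟨fun i => ∑ j, mu j i, ?_, ?_⟩
  · calc ∑ i, (∑ j, mu j i) * g i = ∑ i, ∑ j, mu j i * g i := by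
          refine Finset.sum_congr rfl fun i _ => Finset.sum_mul ..
    _ = ∑ j, ∑ i, mu j i * g i := Finset.sum_comm
    _ = ∑ j, f j := Finset.sum_congr rfl fun j _ => hmu j
    _ = s := hsum
  · have hle : ∑ i, (∑ j, mu j i) * g i = s := by
      calc ∑ i, (∑ j, mu j i) * g i = ∑ i, ∑ j, mu j i * g i := by
            refine Finset.sum_congr rfl fun i _ => Finset.sum_mul ..
      _ = ∑ j, ∑ i, mu j i * g i := Finset.sum_comm
      _ = ∑ j, f j := Finset.sum_congr rfl fun j _ => hmu j
      _ = s := hsum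
    have h1 : ordS S s ≤ ∑ i, ∑ j, mu j i := by
      rw [Finset.sum_comm]
      calc ordS S s = ∑ _j : Fin (ordS S s), 1 := by simp
      _ ≤ ∑ j, ∑ i, mu j i := by
          refine Finset.sum_le_sum fun j _ => ?_
          rcases Nat.eq_zero_or_pos (∑ i, mu j i) with hz | hp
          · exfalso
            have : ∀ i ∈ Finset.univ, mu j i = 0 := Finset.sum_eq_zero_iff.1 hz
            have : f j = 0 := by
              rw [← hmu j]
              exact Finset.sum_eq_zero fun i hi => by rw [this i hi, zero_mul]
            exact (hf j).2 this
          · exact hp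
    have h2 : ∑ i, ∑ j, mu j i ≤ ordS S s := ord_ge_rep hg hgpos hle
    show ∑ i, ∑ j, mu j i = ordS S s
    omega

lemma ordS_zero (S : Set ℕ) : ordS S 0 = 0 :=
  Nat.le_antisymm (csSup_le ⟨0, Fin.elim0, fun j => j.elim0, by simp⟩
    fun _ hh => ordSet_le hh) (Nat.zero_le _)

lemma ordS_pos (hs : s ∈ S) (h0 : s ≠ 0) : 1 ≤ ordS S s :=
  le_csSup (ordSet_bddAbove S s) ⟨fun _ => s, fun _ => ⟨hs, h0⟩, by simp⟩

lemma ordS_superadd (hgen : Generates S g) (hg : ∀ i, g i ∈ S) (hgpos : ∀ i, g i ≠ 0)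
    {a b : ℕ} (ha : a ∈ S) (hb : b ∈ S) :
    ordS S a + ordS S b ≤ ordS S (a + b) := by
  obtain ⟨la, hla, hsa⟩ := exists_maxrep hgen hg hgpos ha
  obtain ⟨lb, hlb, hsb⟩ := exists_maxrep hgen hg hgpos hb
  have : ∑ i, (la i + lb i) * g i = a + b := by
    rw [Finset.sum_congr rfl fun i _ => add_mul (la i) (lb i) (g i),
      Finset.sum_add_distrib, hla, hlb]
  have := ord_ge_rep hg hgpos this
  rw [Finset.sum_add_distrib, hsa, hsb] at this
  exact this

lemma rep_mem (hgen : Generates S g) (lam : Fin ν → ℕ) : ∑ i, lam i * g i ∈ S :=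
  (hgen _).2 ⟨lam, rfl⟩

/-- Splitting off part of a maximal representation computes ord exactly. -/
lemma split_ord (hgen : Generates S g) (hg : ∀ i, g i ∈ S) (hgpos : ∀ i, g i ≠ 0)
    {t : ℕ} {lam mu : Fin ν → ℕ} (hrep : ∑ i, lam i * g i = t)
    (hmax : ∑ i, lam i = ordS S t) (hle : ∀ i, mu i ≤ lam i) :
    ordS S (∑ i, mu i * g i) = ∑ i, mu i := by
  set a := ∑ i, mu i * g i with hadef
  set b := ∑ i, (lam i - mu i) * g i with hbdef
  have hab : a + b = t := by
    rw [hadef, hbdef, ← Finset.sum_add_distrib, ← hrep]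
    refine Finset.sum_congr rfl fun i _ => ?_
    rw [← add_mul, Nat.add_sub_cancel' (hle i)]
  have hsums : ∑ i, mu i + ∑ i, (lam i - mu i) = ∑ i, lam i := by
    rw [← Finset.sum_add_distrib]
    exact Finset.sum_congr rfl fun i _ => Nat.add_sub_cancel' (hle i)
  have h1 : ∑ i, mu i ≤ ordS S a := ord_ge_rep hg hgpos rfl
  have h2 : ∑ i, (lam i - mu i) ≤ ordS S b := ord_ge_rep hg hgpos rfl
  have h3 : ordS S a + ordS S b ≤ ordS S t := by
    rw [← hab]
    exact ordS_superadd hgen hg hgpos (rep_mem hgen mu) (rep_mem hgen _)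
  omega

lemma sum_single_mul (g : Fin ν → ℕ) (i : Fin ν) (c : ℕ) :
    ∑ j, (Pi.single i c : Fin ν → ℕ) j * g j = c * g i := by
  simp [Pi.single_apply, ite_mul]

lemma apery_summand {m t a b : ℕ} (ht : InApery S m t) (hab : a + b = t)
    (hS2 : ∀ a ∈ S, ∀ b ∈ S, a + b ∈ S) (ha : a ∈ S) (hb : b ∈ S) :
    InApery S m a := by
  refine ⟨ha, fun u hu hum => ?_⟩
  exact ht.2 (u + b) (hS2 u hu b hb) (by omega)

lemma apery_bdd (hS : IsNumSgp S) {m : ℕ} (hm : 0 < m) :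
    ∃ N, ∀ s, InApery S m s → s ≤ N := by
  obtain ⟨F, hF⟩ := hS.2.2.bddAbove
  refine ⟨F + m, fun s hs => ?_⟩
  by_contra hgt
  push_neg at hgt
  have hsm : s - m ∉ S := fun hmem => hs.2 (s - m) hmem (by omega)
  have : s - m ≤ F := hF hsm
  omega

/-- The defining set of `betaN`. -/
def betaSet (S : Set ℕ) (m : ℕ) {ν : ℕ} (g : Fin ν → ℕ) (i : Fin ν) : Set ℕ :=
  {h : ℕ | InApery S m (h * g i) ∧ ordS S (h * g i) = h}

lemma betaN_eq_sSup (S : Set ℕ) (m : ℕ) (g : Fin ν → ℕ) (i : Fin ν) :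
    betaN S m g i = sSup (betaSet S m g i) := rfl

lemma betaSet_nonempty (h0 : 0 ∈ S) {m : ℕ} (hm : 0 < m) (i : Fin ν) :
    (betaSet S m g i).Nonempty :=
  ⟨0, ⟨⟨by simpa using h0, fun u _ => by omega⟩, by simpa using ordS_zero S⟩⟩

lemma betaSet_bddAbove {m N : ℕ} (hN : ∀ s, InApery S m s → s ≤ N)
    (i : Fin ν) (hgi : 0 < g i) : BddAbove (betaSet S m g i) := by
  refine ⟨N, fun h hh => ?_⟩
  have := hN _ hh.1
  calc h ≤ h * g i := Nat.le_mul_of_pos_right h hgi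
  _ ≤ N := this

lemma betaN_mem (h0 : 0 ∈ S) {m N : ℕ} (hm : 0 < m) (hN : ∀ s, InApery S m s → s ≤ N)
    (i : Fin ν) (hgi : 0 < g i) :
    InApery S m (betaN S m g i * g i) ∧ ordS S (betaN S m g i * g i) = betaN S m g i :=
  Nat.sSup_mem (betaSet_nonempty h0 hm i) (betaSet_bddAbove hN i hgi)

lemma le_betaN {m N : ℕ} (hN : ∀ s, InApery S m s → s ≤ N) (i : Fin ν) (hgi : 0 < g i)
    {h : ℕ} (hh : h ∈ betaSet S m g i) : h ≤ betaN S m g i :=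
  le_csSup (betaSet_bddAbove hN i hgi) hh

lemma betaN_zero [NeZero ν] (hgen : Generates S g) (h0 : 0 ∈ S) (hmpos : 0 < g 0) :
    betaN S (g 0) g 0 = 0 := by
  refine Nat.le_antisymm (csSup_le (betaSet_nonempty h0 hmpos 0) fun h hh => ?_) (Nat.zero_le _)
  rcases Nat.eq_zero_or_pos h with rfl | hp
  · exact le_rfl
  · exfalso
    have hu : (h - 1) * g 0 ∈ S := by
      have := rep_mem hgen (Pi.single (0 : Fin ν) (h - 1))
      rwa [sum_single_mul] at this
    refine hh.1.2 ((h - 1) * g 0) hu ?_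
    have : (h - 1) * g 0 + g 0 = (h - 1 + 1) * g 0 := (Nat.succ_mul _ _).symm
    rw [this, Nat.sub_add_cancel hp]

/-- A maximal representation of an Apéry element has zero first coordinate and
lies in the beta-box. -/
lemma maxrep_box [NeZero ν] (hgen : Generates S g) (hg : ∀ i, g i ∈ S)
    (hgpos : ∀ i, g i ≠ 0)
    (hS2 : ∀ a ∈ S, ∀ b ∈ S, a + b ∈ S) {N : ℕ}
    (hN : ∀ s, InApery S (g 0) s → s ≤ N)
    {t : ℕ} (ht : InApery S (g 0) t) {lam : Fin ν → ℕ}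
    (hrep : ∑ i, lam i * g i = t) (hmax : ∑ i, lam i = ordS S t) :
    lam 0 = 0 ∧ ∀ i, lam i ≤ betaN S (g 0) g i := by
  have key : ∀ i : Fin ν, InApery S (g 0) (lam i * g i) ∧ ordS S (lam i * g i) = lam i := by
    intro i
    have hmu : ∀ j, (Pi.single i (lam i) : Fin ν → ℕ) j ≤ lam j := by
      intro j
      rcases eq_or_ne j i with rfl | hne
      · simp
      · simp [Pi.single_apply, hne]
    have hord : ordS S (∑ j, (Pi.single i (lam i) : Fin ν → ℕ) j * g j) = ∑ j, (Pi.single i (lam i) : Fin ν → ℕ) j :=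
      split_ord hgen hg hgpos hrep hmax hmu
    rw [sum_single_mul] at hord
    simp only [Finset.sum_pi_single', Finset.mem_univ, if_pos] at hord
    have hmem : InApery S (g 0) (lam i * g i) := by
      refine apery_summand ht ?_ hS2 ?_ (rep_mem hgen (fun j => lam j - (Pi.single i (lam i) : Fin ν → ℕ) j))
      · rw [← sum_single_mul g i (lam i), ← Finset.sum_add_distrib, ← hrep]
        refine Finset.sum_congr rfl fun j _ => ?_
        rw [← add_mul, Nat.add_sub_cancel' (hmu j)]
      · rw [← sum_single_mul g i (lam i)]
        exact rep_mem hgen _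
    exact ⟨hmem, hord⟩
  constructor
  · by_contra hne
    have hp : 0 < lam 0 := Nat.pos_of_ne_zero hne
    have h1 : InApery S (g 0) (lam 0 * g 0) := (key 0).1
    have hu : (lam 0 - 1) * g 0 ∈ S := by
      have := rep_mem hgen (Pi.single (0 : Fin ν) (lam 0 - 1))
      rwa [sum_single_mul] at this
    refine h1.2 ((lam 0 - 1) * g 0) hu ?_
    have : (lam 0 - 1) * g 0 + g 0 = (lam 0 - 1 + 1) * g 0 := (Nat.succ_mul _ _).symm
    rw [this, Nat.sub_add_cancel hp]
  · intro i
    exact le_betaN hN i (Nat.pos_of_ne_zero (hgpos i)) (key i)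

lemma predM_refl (h0 : 0 ∈ S) (t : ℕ) : predM S t t :=
  ⟨0, h0, by omega, by rw [ordS_zero]; omega⟩

lemma predM_trans (hgen : Generates S g) (hg : ∀ i, g i ∈ S) (hgpos : ∀ i, g i ≠ 0)
    (hS2 : ∀ a ∈ S, ∀ b ∈ S, a + b ∈ S)
    {s t r : ℕ} (hs : s ∈ S) (h1 : predM S s t) (h2 : predM S t r) : predM S s r := by
  obtain ⟨u1, hu1, he1, ho1⟩ := h1
  obtain ⟨u2, hu2, he2, ho2⟩ := h2
  refine ⟨u1 + u2, hS2 u1 hu1 u2 hu2, by omega, ?_⟩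
  have hsup : ordS S u1 + ordS S u2 ≤ ordS S (u1 + u2) :=
    ordS_superadd hgen hg hgpos hu1 hu2
  have hsup2 : ordS S s + ordS S (u1 + u2) ≤ ordS S (s + (u1 + u2)) :=
    ordS_superadd hgen hg hgpos hs (hS2 u1 hu1 u2 hu2)
  have : s + (u1 + u2) = r := by omega
  rw [this] at hsup2
  omega

lemma exists_max_above (hgen : Generates S g) (hg : ∀ i, g i ∈ S) (hgpos : ∀ i, g i ≠ 0)
    (hS2 : ∀ a ∈ S, ∀ b ∈ S, a + b ∈ S) (h0 : 0 ∈ S) {m N : ℕ}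
    (hN : ∀ s, InApery S m s → s ≤ N) :
    ∀ (k t : ℕ), InApery S m t → N - t ≤ k →
      ∃ w, InApery S m w ∧ predM S t w ∧ (∀ r, InApery S m r → predM S w r → r = w) := by
  intro k
  induction k with
  | zero =>
    intro t ht hk
    refine ⟨t, ht, predM_refl h0 t, fun r hr hpr => ?_⟩
    obtain ⟨u, hu, he, -⟩ := hpr
    have h1 : r ≤ N := hN r hr
    have h2 : t ≤ N := hN t ht
    omega
  | succ k ih =>
    intro t ht hk
    by_cases hmax : ∀ r, InApery S m r → predM S t r → r = t
    · exact ⟨t, ht, predM_refl h0 t, hmax⟩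
    · push_neg at hmax
      obtain ⟨r, hr, hpr, hne⟩ := hmax
      have hrN := hN r hr
      obtain ⟨u, hu, he, -⟩ := id hpr
      have hupos : 0 < u := by
        rcases Nat.eq_zero_or_pos u with rfl | h
        · exact absurd (by omega : r = t) hne
        · exact h
      have hk' : N - r ≤ k := by omega
      obtain ⟨w, hw, hpw, hwmax⟩ := ih r hr hk'
      exact ⟨w, hw, predM_trans hgen hg hgpos hS2 ht.1 hpr hpw, hwmax⟩

end Aux

theorem betaRect_iff_unique_maxM (S : Set ℕ) {ν : ℕ} [NeZero ν] (g : Fin ν → ℕ) (hν : 2 ≤ ν)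
    (hS : IsNumSgp S) (hgen : MinimalGen S g) (hmono : StrictMono g)
    (hmpos : 0 < g 0) (hmul : ∀ s ∈ S, s ≠ 0 → g 0 ≤ s) :
    AperySet S (g 0) = Bset S (g 0) g ↔
      ∃ w : ℕ, InApery S (g 0) w ∧
        (∀ t, InApery S (g 0) t → predM S w t → t = w) ∧
        (∀ w', InApery S (g 0) w' → (∀ t, InApery S (g 0) t → predM S w' t → t = w') → w' = w) ∧
        UniqueMaxRep S g w := by
  obtain ⟨hgen, -⟩ := hgen
  obtain ⟨h0S, hS2, hfin⟩ := hS
  have hg : ∀ i, g i ∈ S := fun i => by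
    have := rep_mem hgen (Pi.single i 1)
    rwa [sum_single_mul, one_mul] at this
  have hgpos : ∀ i, 0 < g i := fun i =>
    lt_of_lt_of_le hmpos (hmono.monotone (Fin.zero_le i))
  have hgne : ∀ i, g i ≠ 0 := fun i => (hgpos i).ne'
  obtain ⟨N, hN⟩ := apery_bdd ⟨h0S, hS2, hfin⟩ hmpos
  constructor
  · intro hrect
    have hβ0 : betaN S (g 0) g 0 = 0 := betaN_zero hgen h0S hmpos
    have hwB : (∑ i, betaN S (g 0) g i * g i) ∈ Bset S (g 0) g :=
      ⟨betaN S (g 0) g, hβ0, fun i => le_rfl, rfl⟩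
    have hwAp : InApery S (g 0) (∑ i, betaN S (g 0) g i * g i) := by
      rw [← hrect] at hwB
      exact hwB
    have hordw_ge : ∑ i, betaN S (g 0) g i ≤ ordS S (∑ i, betaN S (g 0) g i * g i) :=
      ord_ge_rep hg hgne rfl
    have hord_le_box : ∀ t, InApery S (g 0) t → ordS S t ≤ ∑ i, betaN S (g 0) g i := by
      intro t htAp
      obtain ⟨lam, hrep, hmax⟩ := exists_maxrep hgen hg hgne htAp.1
      obtain ⟨-, hbox⟩ := maxrep_box hgen hg hgne hS2 hN htAp hrep hmax
      calc ordS S t = ∑ i, lam i := hmax.symm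
      _ ≤ ∑ i, betaN S (g 0) g i := Finset.sum_le_sum fun i _ => hbox i
    have hordw : ordS S (∑ i, betaN S (g 0) g i * g i) = ∑ i, betaN S (g 0) g i :=
      le_antisymm (hord_le_box _ hwAp) hordw_ge
    refine ⟨∑ i, betaN S (g 0) g i * g i, hwAp, ?_, ?_, ?_⟩
    · rintro t htAp ⟨u, hu, he, ho⟩
      have h1 : ordS S t ≤ ∑ i, betaN S (g 0) g i := hord_le_box t htAp
      have hu0 : u = 0 := by
        by_contra hne
        have := ordS_pos hu hne
        omega
      omega
    · intro w' hw'Ap hw'max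
      obtain ⟨lam, hrep, hmax⟩ := exists_maxrep hgen hg hgne hw'Ap.1
      obtain ⟨-, hbox⟩ := maxrep_box hgen hg hgne hS2 hN hw'Ap hrep hmax
      have huS : ∑ i, (betaN S (g 0) g i - lam i) * g i ∈ S := rep_mem hgen _
      have hsum : w' + ∑ i, (betaN S (g 0) g i - lam i) * g i
          = ∑ i, betaN S (g 0) g i * g i := by
        rw [← hrep, ← Finset.sum_add_distrib]
        exact Finset.sum_congr rfl fun i _ => by
          rw [← add_mul, Nat.add_sub_cancel' (hbox i)]
      have hordu : ∑ i, (betaN S (g 0) g i - lam i)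
          ≤ ordS S (∑ i, (betaN S (g 0) g i - lam i) * g i) := ord_ge_rep hg hgne rfl
      have hsupp : ordS S w' + ordS S (∑ i, (betaN S (g 0) g i - lam i) * g i)
          ≤ ordS S (∑ i, betaN S (g 0) g i * g i) := by
        rw [← hsum]
        exact ordS_superadd hgen hg hgne hw'Ap.1 huS
      have hsums : ∑ i, lam i + ∑ i, (betaN S (g 0) g i - lam i)
          = ∑ i, betaN S (g 0) g i := by
        rw [← Finset.sum_add_distrib]
        exact Finset.sum_congr rfl fun i _ => Nat.add_sub_cancel' (hbox i)
      have hordeq : ordS S w' + ordS S (∑ i, (betaN S (g 0) g i - lam i) * g i)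
          = ordS S (∑ i, betaN S (g 0) g i * g i) := by omega
      exact (hw'max _ hwAp ⟨_, huS, hsum, hordeq⟩).symm ▸ rfl
    · refine ⟨betaN S (g 0) g, ⟨rfl, hordw.symm⟩, ?_⟩
      rintro μ ⟨hμrep, hμsum⟩
      obtain ⟨-, hμbox⟩ := maxrep_box hgen hg hgne hS2 hN hwAp hμrep hμsum
      funext i
      by_contra hne
      have hlt : μ i < betaN S (g 0) g i := lt_of_le_of_ne (hμbox i) hne
      have : ∑ j, μ j < ∑ j, betaN S (g 0) g j :=
        Finset.sum_lt_sum (fun j _ => hμbox j) ⟨i, Finset.mem_univ i, hlt⟩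
      omega
  · rintro ⟨w, hwAp, hwmax, hwuniq, hUMR⟩
    obtain ⟨lam, ⟨hrep, hmaxs⟩, hlamuniq⟩ := hUMR
    have hβle : ∀ i, betaN S (g 0) g i ≤ lam i := by
      intro i
      obtain ⟨hbAp, hbord⟩ := betaN_mem h0S hmpos hN i (hgpos i)
      obtain ⟨w', hw'Ap, hpred, hw'max⟩ :=
        exists_max_above hgen hg hgne hS2 h0S hN N (betaN S (g 0) g i * g i) hbAp
          (Nat.sub_le N _)
      have hww : w' = w := hwuniq w' hw'Ap hw'max
      subst hww
      obtain ⟨u, hu, he, ho⟩ := hpred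
      obtain ⟨μ, hμrep, hμsum⟩ := exists_maxrep hgen hg hgne hu
      have hνrep : ∑ j, ((Pi.single i (betaN S (g 0) g i) : Fin ν → ℕ) j + μ j) * g j
          = w' := by
        rw [Finset.sum_congr rfl fun j _ => add_mul _ _ (g j), Finset.sum_add_distrib,
          sum_single_mul, hμrep]
        omega
      have hνsum : ∑ j, ((Pi.single i (betaN S (g 0) g i) : Fin ν → ℕ) j + μ j)
          = ordS S w' := by
        rw [Finset.sum_add_distrib, hμsum]
        have : ∑ j, (Pi.single i (betaN S (g 0) g i) : Fin ν → ℕ) j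
            = betaN S (g 0) g i := by
          simp [Pi.single_apply]
        omega
      have hle := hlamuniq _ ⟨hνrep, hνsum⟩
      have : lam i = betaN S (g 0) g i + μ i := by
        rw [← hle]
        simp [Pi.single_apply]
      omega
    ext s
    simp only [AperySet, Bset, Set.mem_setOf_eq]
    constructor
    · intro hsAp
      obtain ⟨μ, hμrep, hμmax⟩ := exists_maxrep hgen hg hgne hsAp.1
      obtain ⟨hz, hb⟩ := maxrep_box hgen hg hgne hS2 hN hsAp hμrep hμmax
      exact ⟨μ, hz, hb, hμrep⟩
    · rintro ⟨μ, hz0, hble, hμrep⟩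
      have hμlam : ∀ i, μ i ≤ lam i := fun i => le_trans (hble i) (hβle i)
      have huS : ∑ i, (lam i - μ i) * g i ∈ S := rep_mem hgen _
      have hsum : s + ∑ i, (lam i - μ i) * g i = w := by
        rw [← hμrep, ← Finset.sum_add_distrib, ← hrep]
        exact Finset.sum_congr rfl fun i _ => by
          rw [← add_mul, Nat.add_sub_cancel' (hμlam i)]
      have hsS : s ∈ S := hμrep ▸ rep_mem hgen μ
      exact apery_summand hwAp hsum hS2 hsS huS
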